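/- The probability of the event Success equals Σ_{j=2}^{K} C(K,j) · (1−p)^j · ( p/(q−1) )^{K−j} · Σ_{(r_1,…,r_{q−1})} ( (K−j)! / (r_1!···r_{q−1}!) ), where the inner sum runs over all tuples of nonnegative integers (r_1,…,r_{q−1}) with r_1 + ··· + r_{q−1} = K−j and r_i < j for every i. -/

import Mathlib

open scoped BigOperators Classical
open Finset

/-- Number of coordinates of `y` equal to the symbol `a`. -/
def cntY {A : Type*} [DecidableEq A] {K : ℕ} (y : Fin K → A) (a : A) : ℕ :=
  (Finset.univ.filter fun j => y j = a).card

/-- Erasure_A: the coordinates of `y` are pairwise distinct and some coordinate equals `c`. -/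
def IsErasureA {A : Type*} {K : ℕ} (c : A) (y : Fin K → A) : Prop :=
  Function.Injective y ∧ ∃ j, y j = c

/-- Erasure_B: the coordinates of `y` are pairwise distinct and no coordinate equals `c`. -/
def IsErasureB {A : Type*} {K : ℕ} (c : A) (y : Fin K → A) : Prop :=
  Function.Injective y ∧ ∀ j, y j ≠ c

/-- Success: some symbol occurs at least twice, strictly more often than every other symbol,
and that symbol equals `c`. -/
def IsSuccess {A : Type*} [DecidableEq A] {K : ℕ} (c : A) (y : Fin K → A) : Prop :=
  2 ≤ cntY y c ∧ ∀ a, a ≠ c → cntY y a < cntY y c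

/-- Error: the complement of Erasure_A ∪ Erasure_B ∪ Success. -/
def IsError {A : Type*} [DecidableEq A] {K : ℕ} (c : A) (y : Fin K → A) : Prop :=
  ¬(IsErasureA c y ∨ IsErasureB c y ∨ IsSuccess c y)

/-- Probability of the event `E` for a random vector `Y ∈ A^K` with i.i.d. coordinates,
each equal to `c` with probability `1 − p` and equal to each other fixed symbol with
probability `p/(q−1)`. -/
noncomputable def prEvent {A : Type*} [Fintype A] [DecidableEq A] (q K : ℕ) (p : ℝ)
    (c : A) (E : (Fin K → A) → Prop) : ℝ :=
  ∑ y : Fin K → A,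
    (∏ j : Fin K, (if y j = c then 1 - p else p / ((q : ℝ) - 1))) *
      (if E y then 1 else 0)


lemma card_subtype_filter {D : Type*} [Fintype D] [DecidableEq D] {A : Type*} [DecidableEq A]
    (B : Finset D) (f : D → A) (b : A) (hb : ∀ i, f i = b → i ∉ B) :
    (Finset.univ.filter fun i : {i : D // i ∉ B} => f i.1 = b).card
      = (Finset.univ.filter fun i : D => f i = b).card := by
  apply Finset.card_bij' (i := fun i _ => i.1)
    (j := fun i hi => ⟨i, hb i (by simpa using hi)⟩)
  all_goals intro x hx
  any_goals rfl
  all_goals simp only [Finset.mem_filter, Finset.mem_univ, true_and] at hx ⊢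
  all_goals exact hx

lemma card_count (A : Type*) [Fintype A] [DecidableEq A] (s : Finset A) :
    ∀ (D : Type) [Fintype D] [DecidableEq D] (n : A → ℕ),
      ∑ a ∈ s, n a = Fintype.card D →
      (Finset.univ.filter fun f : D → A =>
          (∀ i, f i ∈ s) ∧ ∀ a ∈ s, (Finset.univ.filter fun i => f i = a).card = n a).card
        = Nat.multinomial s n := by
  induction s using Finset.cons_induction with
  | empty =>
      intro D _ _ n h
      simp only [Finset.sum_empty] at h
      have hD : IsEmpty D := Fintype.card_eq_zero_iff.mp h.symm
      rw [Finset.filter_true_of_mem (fun f _ => ⟨fun i => (hD.false i).elim,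
        fun a ha => absurd ha (Finset.notMem_empty a)⟩)]
      simp [Finset.card_univ]
  | cons a s' ha ih =>
      intro D _ _ n h
      rw [Finset.sum_cons] at h
      rw [Nat.multinomial_cons]
      have Hmaps : ∀ f ∈ (Finset.univ.filter fun f : D → A =>
          (∀ i, f i ∈ cons a s' ha) ∧ ∀ b ∈ cons a s' ha,
            (Finset.univ.filter fun i => f i = b).card = n b),
          (Finset.univ.filter fun i => f i = a) ∈
            Finset.powersetCard (n a) (Finset.univ : Finset D) := by
        intro f hf
        rw [Finset.mem_powersetCard]
        exact ⟨Finset.filter_subset _ _ |>.trans (by simp),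
          (Finset.mem_filter.mp hf).2.2 a (Finset.mem_cons_self a s')⟩
      rw [Finset.card_eq_sum_card_fiberwise Hmaps]
      rw [Finset.sum_congr rfl (fun B hB => ?_), Finset.sum_const,
        Finset.card_powersetCard, Finset.card_univ, ← h, smul_eq_mul]
      -- per-fiber count
      obtain ⟨-, hBcard⟩ := Finset.mem_powersetCard.mp hB
      have hD' : Fintype.card {i : D // i ∉ B} = Fintype.card D - n a := by
        rw [Fintype.card_subtype_compl, Fintype.card_coe, hBcard]
      have h' : ∑ b ∈ s', n b = Fintype.card {i : D // i ∉ B} := by omega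
      rw [← ih {i : D // i ∉ B} n h']
      apply Finset.card_bij' (i := fun f _ => fun i : {i : D // i ∉ B} => f i.1)
        (j := fun g _ => fun i : D => if hi : i ∈ B then a else g ⟨i, hi⟩)
      · -- forward membership
        intro f hf
        simp only [Finset.mem_filter, Finset.mem_univ, true_and] at hf ⊢
        obtain ⟨⟨hf1, hf2⟩, hfib⟩ := hf
        have hBa : ∀ i : D, i ∈ B ↔ f i = a := by
          intro i; rw [← hfib]; simp
        constructor
        · intro i
          rcases Finset.mem_cons.mp (hf1 i.1) with h1 | h1
          · exact absurd ((hBa i.1).mpr h1) i.2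
          · exact h1
        · intro b hb
          have hba : b ≠ a := fun hh => ha (hh ▸ hb)
          rw [card_subtype_filter B f b (fun i hi => fun hiB => hba (hi ▸ ((hBa i).mp hiB) ▸ rfl))]
          · exact hf2 b (Finset.mem_cons_of_mem hb)
      · -- backward membership
        intro g hg
        simp only [Finset.mem_filter, Finset.mem_univ, true_and] at hg ⊢
        obtain ⟨hg1, hg2⟩ := hg
        have hfB : (Finset.univ.filter fun i : D =>
            (if hi : i ∈ B then a else g ⟨i, hi⟩) = a) = B := by
          ext i
          simp only [Finset.mem_filter, Finset.mem_univ, true_and]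
          by_cases hi : i ∈ B
          · simp [hi]
          · simp only [hi, dif_neg, iff_false]
            intro hh; exact ha (hh ▸ hg1 ⟨i, hi⟩)
        refine ⟨⟨?_, ?_⟩, hfB⟩
        · intro i
          by_cases hi : i ∈ B
          · simp [hi, Finset.mem_cons_self]
          · simp only [hi, dif_neg]
            exact Finset.mem_cons_of_mem (hg1 ⟨i, hi⟩)
        · intro b hb
          rcases Finset.mem_cons.mp hb with rfl | hb'
          · rw [hfB, hBcard]
          · have hba : b ≠ a := fun hh => ha (hh ▸ hb')
            rw [← card_subtype_filter B _ b (fun i hi hiB => by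
              rw [dif_pos hiB] at hi; exact hba hi.symm)]
            rw [show (Finset.univ.filter fun i : {i : D // i ∉ B} =>
                (if hi : i.1 ∈ B then a else g ⟨i.1, hi⟩) = b)
              = (Finset.univ.filter fun i : {i : D // i ∉ B} => g i = b) from
              Finset.filter_congr (fun i _ => by rw [dif_neg i.2])]
            exact hg2 b hb'
      · -- left inverse
        intro f hf
        simp only [Finset.mem_filter, Finset.mem_univ, true_and] at hf
        obtain ⟨-, hfib⟩ := hf
        funext i
        by_cases hi : i ∈ B
        · rw [dif_pos hi]
          have := hfib ▸ hi
          exact ((Finset.mem_filter.mp this).2).symm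
        · rw [dif_neg hi]
      · -- right inverse
        intro g hg
        funext i
        show (if hi : i.1 ∈ B then a else g ⟨i.1, hi⟩) = g i
        rw [dif_neg i.2]

lemma cnt_le {A : Type*} [DecidableEq A] {K : ℕ} (y : Fin K → A) (a : A) : cntY y a ≤ K := by
  have := Finset.card_filter_le (Finset.univ : Finset (Fin K)) fun j => y j = a
  simpa [cntY] using this

lemma sum_cnt {A : Type*} [Fintype A] [DecidableEq A] {K : ℕ} (y : Fin K → A) :
    ∑ a : A, cntY y a = K := by
  have := Finset.card_eq_sum_card_fiberwise
    (f := y) (s := Finset.univ) (t := Finset.univ) (fun x _ => Finset.mem_univ _)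
  simpa [cntY] using this.symm

lemma sum_split {A : Type*} [Fintype A] [DecidableEq A] (c : A) (f : A → ℕ) :
    ∑ a : A, f a = f c + ∑ i : {a : A // a ≠ c}, f i.1 := by
  rw [Fintype.sum_eq_add_sum_compl c f,
    Finset.sum_subtype (p := fun a => a ≠ c) ({c}ᶜ : Finset A) (fun x => by simp) f]

/-- P(Success) = Σ_{j=2}^{K} C(K,j)·(1−p)^j·(p/(q−1))^{K−j}·
Σ_{(r_i)_{i≠c}, Σ r_i = K−j, r_i < j} (K−j)!/(Π r_i!). -/
theorem stmt6 {A : Type*} [Fintype A] [DecidableEq A] (q K : ℕ)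
    (hK : 2 ≤ K) (hq : K < q) (p : ℝ) (hp : p ∈ Set.Ioo (0 : ℝ) 1)
    (hA : Fintype.card A = q) (c : A) :
    prEvent q K p c (IsSuccess c) =
      ∑ j ∈ Finset.Icc 2 K,
        (Nat.choose K j : ℝ) * (1 - p) ^ j * (p / ((q : ℝ) - 1)) ^ (K - j) *
          ∑ r ∈ (Fintype.piFinset fun _ : {a : A // a ≠ c} => Finset.range j).filter
              (fun r => ∑ i, r i = K - j),
            (((K - j).factorial : ℝ) / ∏ i, ((r i).factorial : ℝ)) := by
  classical
  unfold prEvent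
  have key : ∀ y : Fin K → A,
      ((∏ j : Fin K, (if y j = c then 1 - p else p / ((q : ℝ) - 1))) *
        (if IsSuccess c y then (1 : ℝ) else 0))
      = if IsSuccess c y then
          (1 - p) ^ cntY y c * (p / ((q : ℝ) - 1)) ^ (K - cntY y c) else 0 := by
    intro y
    have hprod : (∏ j : Fin K, (if y j = c then 1 - p else p / ((q : ℝ) - 1)))
        = (1 - p) ^ cntY y c * (p / ((q : ℝ) - 1)) ^ (K - cntY y c) := by
      rw [Finset.prod_ite, Finset.prod_const, Finset.prod_const]
      have h1 : (Finset.univ.filter fun j : Fin K => y j = c).card = cntY y c := rfl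
      have h2 : (Finset.univ.filter fun j : Fin K => ¬ y j = c).card = K - cntY y c := by
        have h3 := Finset.card_filter_add_card_filter_not
          (s := (Finset.univ : Finset (Fin K))) (p := fun j => y j = c)
        simp only [Finset.card_univ, Fintype.card_fin] at h3
        omega
      rw [h1, h2]
    rw [hprod, mul_ite, mul_one, mul_zero]
  rw [Finset.sum_congr rfl fun y _ => key y, ← Finset.sum_filter]
  have hmaps : ∀ y ∈ Finset.univ.filter fun y : Fin K → A => IsSuccess c y,
      cntY y c ∈ Finset.Icc 2 K := by
    intro y hy
    exact Finset.mem_Icc.mpr ⟨((Finset.mem_filter.mp hy).2).1, cnt_le y c⟩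
  rw [← Finset.sum_fiberwise_of_maps_to hmaps]
  refine Finset.sum_congr rfl fun j hj => ?_
  obtain ⟨hj2, hjK⟩ := Finset.mem_Icc.mp hj
  rw [Finset.filter_filter]
  have hconst : ∀ y ∈ Finset.univ.filter fun y : Fin K → A =>
      IsSuccess c y ∧ cntY y c = j,
      (1 - p) ^ cntY y c * (p / ((q : ℝ) - 1)) ^ (K - cntY y c)
        = (1 - p) ^ j * (p / ((q : ℝ) - 1)) ^ (K - j) := by
    intro y hy
    rw [((Finset.mem_filter.mp hy).2).2]
  rw [Finset.sum_congr rfl hconst, Finset.sum_const, nsmul_eq_mul]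
  -- real-valued inner sum = multinomial cast
  have hreal : ∀ r ∈ (Fintype.piFinset fun _ : {a : A // a ≠ c} => Finset.range j).filter
      (fun r => ∑ i, r i = K - j),
      (((K - j).factorial : ℝ) / ∏ i, ((r i).factorial : ℝ))
        = (Nat.multinomial Finset.univ (fun i : {a : A // a ≠ c} => r i) : ℝ) := by
    intro r hr
    have hrsum : ∑ i, r i = K - j := (Finset.mem_filter.mp hr).2
    have hspec := Nat.multinomial_spec (Finset.univ : Finset {a : A // a ≠ c}) r
    rw [hrsum] at hspec
    have hpos : (0 : ℝ) < ∏ i, ((r i).factorial : ℝ) := by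
      apply Finset.prod_pos
      intro i _
      exact_mod_cast (r i).factorial_pos
    rw [div_eq_iff (ne_of_gt hpos)]
    rw [mul_comm]
    exact_mod_cast (congrArg (Nat.cast : ℕ → ℝ) hspec).symm
  rw [Finset.sum_congr rfl hreal]
  -- the counting identity
  have hNj : (Finset.univ.filter fun y : Fin K → A => IsSuccess c y ∧ cntY y c = j).card
      = K.choose j * ∑ r ∈ (Fintype.piFinset fun _ : {a : A // a ≠ c} => Finset.range j).filter
          (fun r => ∑ i, r i = K - j),
          Nat.multinomial Finset.univ (fun i : {a : A // a ≠ c} => r i) := by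
    have hmaps2 : ∀ y ∈ Finset.univ.filter fun y : Fin K → A =>
        IsSuccess c y ∧ cntY y c = j,
        (fun i : {a : A // a ≠ c} => cntY y i.1) ∈
          (Fintype.piFinset fun _ : {a : A // a ≠ c} => Finset.range j).filter
            (fun r => ∑ i, r i = K - j) := by
      intro y hy
      obtain ⟨⟨-, hsuc⟩, hcnt⟩ := (Finset.mem_filter.mp hy).2
      rw [Finset.mem_filter]
      constructor
      · rw [Fintype.mem_piFinset]
        intro i
        rw [Finset.mem_range]
        exact hcnt ▸ hsuc i.1 i.2
      · have h1 := sum_cnt y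
        rw [sum_split c (cntY y)] at h1
        show ∑ i : {a : A // a ≠ c}, cntY y i.1 = K - j
        omega
    rw [Finset.card_eq_sum_card_fiberwise hmaps2, Finset.mul_sum]
    refine Finset.sum_congr rfl fun r hr => ?_
    have hrrange : ∀ i, r i < j := by
      have := (Finset.mem_filter.mp hr).1
      rw [Fintype.mem_piFinset] at this
      intro i; exact Finset.mem_range.mp (this i)
    have hrsum : ∑ i, r i = K - j := (Finset.mem_filter.mp hr).2
    set n : A → ℕ := fun a => if h : a = c then j else r ⟨a, h⟩ with hn
    have hfilt : (Finset.univ.filter fun y : Fin K → A =>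
        IsSuccess c y ∧ cntY y c = j).filter
          (fun y => (fun i : {a : A // a ≠ c} => cntY y i.1) = r)
        = Finset.univ.filter fun y : Fin K → A =>
            (∀ i, y i ∈ Finset.univ) ∧ ∀ a ∈ Finset.univ,
              (Finset.univ.filter fun i => y i = a).card = n a := by
      rw [Finset.filter_filter]
      apply Finset.filter_congr
      intro y _
      simp only [Finset.mem_univ, true_implies, true_and]
      constructor
      · rintro ⟨⟨⟨-, -⟩, hcnt⟩, hvec⟩
        refine ⟨fun i => trivial, fun a => ?_⟩
        by_cases hac : a = c
        · subst hac; rw [hn]; simp only [dif_pos rfl]; exact hcnt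
        · rw [hn]; simp only [dif_neg hac]
          exact congrFun hvec ⟨a, hac⟩
      · rintro ⟨-, hcounts⟩
        have hcntc : cntY y c = j := by
          have := hcounts c; rw [hn] at this; simpa [cntY] using this
        have hcnta : ∀ i : {a : A // a ≠ c}, cntY y i.1 = r i := by
          intro i
          have := hcounts i.1
          rw [hn] at this
          simp only [dif_neg i.2] at this
          exact this
        refine ⟨⟨⟨?_, ?_⟩, hcntc⟩, funext hcnta⟩
        · rw [hcntc]; exact hj2
        · intro a hac
          rw [hcntc, hcnta ⟨a, hac⟩]
          exact hrrange ⟨a, hac⟩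
    have hnc : n c = j := by rw [hn]; simp
    have hsub2 : ∑ i : {a : A // a ≠ c}, n i.1 = K - j := by
      rw [← hrsum]
      exact Finset.sum_congr rfl fun i _ => by rw [hn]; simp only [dif_neg i.2]
    have hsum : ∑ a ∈ Finset.univ, n a = Fintype.card (Fin K) := by
      rw [sum_split c n, hnc, hsub2, Fintype.card_fin]
      omega
    have hcard : (Finset.univ.filter fun y : Fin K → A =>
          (∀ i, y i ∈ Finset.univ) ∧ ∀ a ∈ Finset.univ,
            (Finset.univ.filter fun i => y i = a).card = n a).card
        = Nat.multinomial Finset.univ n := by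
      rw [← card_count A Finset.univ (Fin K) n hsum]
      congr 1
      ext f
      simp only [Finset.mem_filter]
    rw [hfilt, hcard]
    -- multinomial univ n = K.choose j * multinomial subtype r
    have hnotmem : c ∉ ({c}ᶜ : Finset A) := by simp
    rw [← Finset.insert_compl_self c]
    rw [Nat.multinomial_insert hnotmem n]
    have hsubsum : ∑ a ∈ ({c}ᶜ : Finset A), n a = ∑ i : {a : A // a ≠ c}, r i := by
      rw [Finset.sum_subtype (p := fun a => a ≠ c) ({c}ᶜ : Finset A) (fun x => by simp) n]
      exact Finset.sum_congr rfl fun i _ => by rw [hn]; simp only [dif_neg i.2]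
    congr 1
    · rw [hnc, hsubsum, hrsum, Nat.add_sub_cancel' hjK]
    · unfold Nat.multinomial
      rw [hsubsum, hrsum]
      congr 1
      rw [Finset.prod_subtype (p := fun a => a ≠ c) ({c}ᶜ : Finset A) (fun x => by simp)
        (fun a => (n a).factorial)]
      exact Finset.prod_congr rfl fun i _ => by rw [hn]; simp only [dif_neg i.2]
  rw [hNj]
  push_cast
  ring
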